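/- arXiv:2604.24151 — 2 statements merged into one kernel-verified Lean document; each statement's English description precedes it below -/
import Mathlib

section
/- General cut-off lemma: with periodic variables P = {s₁,…,s_n} and bounded variables B, define b(B,P) = |B|₁·(|P|+1) + Σ_{1≤i≤j≤n} lcm(p(s_j), p(s_i)) − |P|(|P|+1)/2, where |B|₁ = Σ_{s∈B}(b(s)−1). Then every product t of linear terms over B ∪ P with length exceeding b(B,P) satisfies: either nf(t) = 0, or there exists a strict subproduct t' ≺ t with nf(t') = nf(t). -/
open Finset

section CntLemmas
variable {ι V : Type*} [DecidableEq ι] [DecidableEq V]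

/-- number of positions in `G` where `c` picks `z` -/
def cnt (c : ι → V) (G : Finset ι) (z : V) : ℕ := (G.filter fun k => c k = z).card

lemma cnt_congr {c c' : ι → V} {G : Finset ι} (h : ∀ k ∈ G, c k = c' k) (z : V) :
    cnt c G z = cnt c' G z := by
  unfold cnt
  congr 1
  apply Finset.filter_congr
  intro k hk
  simp [h k hk]

lemma cnt_le_of_subset {c : ι → V} {G₁ G₂ : Finset ι} (h : G₁ ⊆ G₂) (z : V) :
    cnt c G₁ z ≤ cnt c G₂ z :=
  Finset.card_le_card (Finset.filter_subset_filter _ h)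

lemma cnt_union_disjoint {c : ι → V} {G₁ G₂ : Finset ι} (h : Disjoint G₁ G₂) (z : V) :
    cnt c (G₁ ∪ G₂) z = cnt c G₁ z + cnt c G₂ z := by
  unfold cnt
  rw [Finset.filter_union, Finset.card_union_of_disjoint]
  exact Finset.disjoint_filter_filter h

lemma cnt_sdiff_add {c : ι → V} {G₁ G₂ : Finset ι} (h : G₁ ⊆ G₂) (z : V) :
    cnt c G₁ z + cnt c (G₂ \ G₁) z = cnt c G₂ z := by
  rw [← cnt_union_disjoint Finset.disjoint_sdiff, Finset.union_sdiff_of_subset h]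

lemma cnt_insert {c : ι → V} {G : Finset ι} {k : ι} (hk : k ∉ G) (z : V) :
    cnt c (insert k G) z = cnt c G z + (if c k = z then 1 else 0) := by
  unfold cnt
  rw [Finset.filter_insert]
  split_ifs with h
  · rw [Finset.card_insert_of_notMem (fun hmem => hk (Finset.mem_of_mem_filter _ hmem))]
  · simp

lemma cnt_update {c : ι → V} {G : Finset ι} {k : ι} (hk : k ∈ G) (x : V) (z : V) :
    cnt (Function.update c k x) G z + (if c k = z then 1 else 0)
      = cnt c G z + (if x = z then 1 else 0) := by
  have hG : G = insert k (G.erase k) := (Finset.insert_erase hk).symm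
  have hk' : k ∉ G.erase k := Finset.notMem_erase _ _
  have h1 : cnt (Function.update c k x) (G.erase k) z = cnt c (G.erase k) z := by
    apply cnt_congr
    intro a ha
    exact Function.update_of_ne (Finset.ne_of_mem_erase ha) _ _
  rw [hG, cnt_insert hk', cnt_insert hk', h1, Function.update_self]
  ring

lemma cnt_eq_zero {c : ι → V} {G : Finset ι} {z : V} (h : ∀ k ∈ G, c k ≠ z) :
    cnt c G z = 0 := by
  unfold cnt
  rw [Finset.card_eq_zero, Finset.filter_eq_empty_iff]
  exact h

lemma cnt_eq_card {c : ι → V} {G : Finset ι} {z : V} (h : ∀ k ∈ G, c k = z) :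
    cnt c G z = G.card := by
  unfold cnt
  congr 1
  exact Finset.filter_eq_self.2 h

lemma sum_cnt {c : ι → V} {G : Finset ι} {T : Finset V} (h : ∀ k ∈ G, c k ∈ T) :
    ∑ z ∈ T, cnt c G z = G.card :=
  (Finset.card_eq_sum_card_fiberwise h).symm

end CntLemmas

section IdemSum
variable {α β M : Type*} [AddCommMonoid M]

lemma idem_sum_const (hid : ∀ a : M, a + a = a) (s : Finset α) (hs : s.Nonempty) (a : M) :
    ∑ _x ∈ s, a = a := by
  classical
  induction s using Finset.induction_on with
  | empty => exact absurd hs (by simp)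
  | @insert x s hx ih =>
    rw [Finset.sum_insert hx]
    rcases s.eq_empty_or_nonempty with h | h
    · simp [h]
    · rw [ih h, hid]

lemma idem_sum_image [DecidableEq β] (hid : ∀ a : M, a + a = a) (s : Finset α) (f : α → β)
    (g : β → M) : ∑ y ∈ s.image f, g y = ∑ x ∈ s, g (f x) := by
  classical
  induction s using Finset.induction_on with
  | empty => simp
  | @insert x s hx ih =>
    rw [Finset.image_insert, Finset.sum_insert hx]
    by_cases hfx : f x ∈ s.image f
    · rw [Finset.insert_eq_self.2 hfx, ih]
      rw [← ih, ← Finset.add_sum_erase _ g hfx, ← add_assoc, hid, Finset.add_sum_erase _ g hfx]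
    · rw [Finset.sum_insert hfx, ih]

end IdemSum

section ListPlumb
variable {ι R : Type*} [DecidableEq ι] [CommMonoid R]

lemma list_filter_mem_prod (g : ι → R) :
    ∀ (L : List ι), L.Nodup → ∀ (S : Finset ι), (∀ x ∈ S, x ∈ L) →
      ((L.filter (fun k => k ∈ S)).map g).prod = ∏ k ∈ S, g k := by
  intro L
  induction L with
  | nil =>
    intro _ S hS
    have : S = ∅ := Finset.eq_empty_of_forall_notMem (fun x hx => by simpa using hS x hx)
    simp [this]
  | cons a L ih =>
    intro hnd S hS
    have haL : a ∉ L := (List.nodup_cons.1 hnd).1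
    have hL : L.Nodup := (List.nodup_cons.1 hnd).2
    by_cases ha : a ∈ S
    · have hfc : L.filter (fun k => decide (k ∈ S)) = L.filter (fun k => decide (k ∈ S.erase a)) := by
        apply List.filter_congr
        intro x hx
        have hxa : x ≠ a := fun h => haL (h ▸ hx)
        simp [Finset.mem_erase, hxa]
      have hS' : ∀ x ∈ S.erase a, x ∈ L := by
        intro x hx
        have := hS x (Finset.mem_of_mem_erase hx)
        rcases List.mem_cons.1 this with h | h
        · exact absurd h (Finset.ne_of_mem_erase hx)
        · exact h
      simp only [List.filter_cons, decide_eq_true_eq, ha, if_pos, List.map_cons, List.prod_cons]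
      rw [hfc, ih hL _ hS', Finset.mul_prod_erase _ _ ha]
    · have hS' : ∀ x ∈ S, x ∈ L := by
        intro x hx
        rcases List.mem_cons.1 (hS x hx) with h | h
        · exact absurd (h ▸ hx) ha
        · exact h
      simp only [List.filter_cons, decide_eq_true_eq, ha, if_neg, if_false]
      exact ih hL _ hS'

lemma list_filter_mem_length :
    ∀ (L : List ι), L.Nodup → ∀ (S : Finset ι), (∀ x ∈ S, x ∈ L) →
      (L.filter (fun k => k ∈ S)).length = S.card := by
  intro L
  induction L with
  | nil =>
    intro _ S hS
    have : S = ∅ := Finset.eq_empty_of_forall_notMem (fun x hx => by simpa using hS x hx)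
    simp [this]
  | cons a L ih =>
    intro hnd S hS
    have haL : a ∉ L := (List.nodup_cons.1 hnd).1
    have hL : L.Nodup := (List.nodup_cons.1 hnd).2
    by_cases ha : a ∈ S
    · have hfc : L.filter (fun k => decide (k ∈ S)) = L.filter (fun k => decide (k ∈ S.erase a)) := by
        apply List.filter_congr
        intro x hx
        have hxa : x ≠ a := fun h => haL (h ▸ hx)
        simp [Finset.mem_erase, hxa]
      have hS' : ∀ x ∈ S.erase a, x ∈ L := by
        intro x hx
        have := hS x (Finset.mem_of_mem_erase hx)
        rcases List.mem_cons.1 this with h | h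
        · exact absurd h (Finset.ne_of_mem_erase hx)
        · exact h
      simp only [List.filter_cons, decide_eq_true_eq, ha, if_pos, List.length_cons]
      rw [hfc, ih hL _ hS', Finset.card_erase_of_mem ha]
      have : 0 < S.card := Finset.card_pos.2 ⟨a, ha⟩
      omega
    · have hS' : ∀ x ∈ S, x ∈ L := by
        intro x hx
        rcases List.mem_cons.1 (hS x hx) with h | h
        · exact absurd (h ▸ hx) ha
        · exact h
      simp only [List.filter_cons, decide_eq_true_eq, ha, if_neg, if_false]
      exact ih hL _ hS'

end ListPlumb

section CntExtra
variable {ι V : Type*} [DecidableEq ι] [DecidableEq V]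
lemma cnt_singleton (c : ι → V) (d : ι) (z : V) :
    cnt c {d} z = (if c d = z then 1 else 0) := by
  have : ({d} : Finset ι) = insert d ∅ := rfl
  rw [this, cnt_insert (Finset.notMem_empty d)]
  simp [cnt]
end CntExtra

section CntExtra2
variable {ι V : Type*} [DecidableEq ι] [DecidableEq V]
lemma cnt_override {T G : Finset ι} (hTG : T ⊆ G) {c : ι → V} {y x : V} (hxy : ¬ (x = y))
    (hT : ∀ k ∈ T, c k = y) :
    (cnt (fun k => if k ∈ T then x else c k) G y + T.card = cnt c G y) ∧
    (cnt (fun k => if k ∈ T then x else c k) G x = cnt c G x + T.card) ∧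
    (∀ z, ¬ (z = x) → ¬ (z = y) → cnt (fun k => if k ∈ T then x else c k) G z = cnt c G z) := by
  classical
  refine ⟨?_, ?_, ?_⟩
  · have hset : G.filter (fun k => (if k ∈ T then x else c k) = y)
        = (G.filter fun k => c k = y) \ T := by
      ext a
      simp only [Finset.mem_filter, Finset.mem_sdiff]
      constructor
      · intro ⟨haG, hay⟩
        by_cases haT : a ∈ T
        · rw [if_pos haT] at hay; exact absurd hay hxy
        · rw [if_neg haT] at hay; exact ⟨⟨haG, hay⟩, haT⟩
      · intro ⟨⟨haG, hay⟩, haT⟩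
        exact ⟨haG, by rw [if_neg haT]; exact hay⟩
    have hTsub : T ⊆ G.filter fun k => c k = y := by
      intro a ha
      exact Finset.mem_filter.2 ⟨hTG ha, hT a ha⟩
    unfold cnt
    rw [hset, Finset.card_sdiff_of_subset hTsub]
    have := Finset.card_le_card hTsub
    omega
  · have hset : G.filter (fun k => (if k ∈ T then x else c k) = x)
        = (G.filter fun k => c k = x) ∪ T := by
      ext a
      simp only [Finset.mem_filter, Finset.mem_union]
      constructor
      · intro ⟨haG, hax⟩
        by_cases haT : a ∈ T
        · exact Or.inr haT
        · rw [if_neg haT] at hax; exact Or.inl ⟨haG, hax⟩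
      · intro h
        rcases h with ⟨haG, hax⟩ | haT
        · refine ⟨haG, ?_⟩
          by_cases haT : a ∈ T
          · rw [if_pos haT]
          · rw [if_neg haT]; exact hax
        · exact ⟨hTG haT, by rw [if_pos haT]⟩
    have hdisj : Disjoint (G.filter fun k => c k = x) T := by
      rw [Finset.disjoint_left]
      intro a ha haT
      exact hxy (((Finset.mem_filter.1 ha).2).symm.trans (hT a haT))
    unfold cnt
    rw [hset, Finset.card_union_of_disjoint hdisj]
  · intro z hzx hzy
    unfold cnt
    congr 1
    apply Finset.filter_congr
    intro a haG
    by_cases haT : a ∈ T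
    · simp only [if_pos haT]
      constructor
      · intro h; exact absurd h.symm hzx
      · intro h; exact absurd (h.symm.trans (hT a haT)) hzy
    · simp [if_neg haT]

end CntExtra2

section Expansion
variable {ι V R : Type*} [Fintype ι] [DecidableEq ι] [DecidableEq V] [CommSemiring R]

lemma prod_sum_idem (hid : ∀ a : R, a + a = a) (v : V → R) (W : ι → Finset V)
    (hWne : ∀ k, (W k).Nonempty) (K : Finset ι) :
    ∏ k ∈ K, (∑ x ∈ W k, v x) = ∑ c ∈ Fintype.piFinset W, ∏ k ∈ K, v (c k) := by
  classical
  have hpne : (Fintype.piFinset W).Nonempty := by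
    refine ⟨fun k => (hWne k).choose, ?_⟩
    rw [Fintype.mem_piFinset]
    exact fun k => (hWne k).choose_spec
  induction K using Finset.induction_on with
  | empty => simp [idem_sum_const hid _ hpne (1 : R)]
  | @insert k K hk ih =>
    rw [Finset.prod_insert hk, ih, Finset.sum_mul_sum]
    -- RHS: reindex over image of update map
    have himg : ((W k) ×ˢ (Fintype.piFinset W)).image
        (fun q : V × (ι → V) => Function.update q.2 k q.1) = Fintype.piFinset W := by
      apply Finset.Subset.antisymm
      · intro c hc
        rcases Finset.mem_image.1 hc with ⟨⟨x, c₀⟩, hq, rfl⟩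
        rcases Finset.mem_product.1 hq with ⟨hx, hc₀⟩
        rw [Fintype.mem_piFinset]
        intro a
        rcases eq_or_ne a k with rfl | hak
        · rwa [Function.update_self]
        · rw [Function.update_of_ne hak]
          exact Fintype.mem_piFinset.1 hc₀ a
      · intro c hc
        refine Finset.mem_image.2 ⟨⟨c k, c⟩, ?_, ?_⟩
        · exact Finset.mem_product.2 ⟨Fintype.mem_piFinset.1 hc k, hc⟩
        · exact Function.update_eq_self _ _
    have := idem_sum_image hid ((W k) ×ˢ (Fintype.piFinset W))
      (fun q : V × (ι → V) => Function.update q.2 k q.1)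
      (fun c => ∏ k' ∈ insert k K, v (c k'))
    rw [himg] at this
    rw [this, Finset.sum_product]
    apply Finset.sum_congr rfl
    intro x hx
    apply Finset.sum_congr rfl
    intro c hc
    rw [Finset.prod_insert hk, Function.update_self]
    congr 1
    apply Finset.prod_congr rfl
    intro k' hk'
    exact (congrArg v (Function.update_of_ne (fun h : k' = k => hk (h ▸ hk')) _ _)).symm

lemma prod_pick_eq_prod_pow (v : V → R) [Fintype V] (c : ι → V) (K : Finset ι) :
    ∏ k ∈ K, v (c k) = ∏ z : V, v z ^ cnt c K z := by
  classical
  rw [← Finset.prod_fiberwise_of_maps_to (fun k (_ : k ∈ K) => Finset.mem_univ (c k))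
    (fun k => v (c k))]
  apply Finset.prod_congr rfl
  intro z _
  rw [show (K.filter fun k => c k = z).prod (fun k => v (c k))
      = (K.filter fun k => c k = z).prod (fun _ => v z) from
    Finset.prod_congr rfl (fun k hk => by rw [(Finset.mem_filter.1 hk).2])]
  rw [Finset.prod_const]
  rfl

end Expansion

section Semantics
variable {ι : Type*} [Fintype ι] [DecidableEq ι]
variable {B : Type*} [Fintype B] [DecidableEq B] {n : ℕ}

/-- liveness of a selection on positions `G`: no bounded variable overflows -/
def Live (b : B → ℕ) (c : ι → B ⊕ Fin n) (G : Finset ι) : Prop :=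
  ∀ s : B, cnt c G (Sum.inl s) < b s

/-- reduced monomial of a selection on `G` -/
def nrm (p : Fin n → ℕ) (c : ι → B ⊕ Fin n) (G : Finset ι) : (B → ℕ) × (Fin n → ℕ) :=
  (fun s => cnt c G (Sum.inl s), fun j => cnt c G (Sum.inr j) % p j)

/-- normal form of the product of the linear terms `W k`, `k ∈ G` -/
noncomputable def NFK (b : B → ℕ) (p : Fin n → ℕ) (W : ι → Finset (B ⊕ Fin n)) (G : Finset ι) :
    Finset ((B → ℕ) × (Fin n → ℕ)) :=
  (@Finset.filter _ (fun c => Live b c G) (Classical.decPred _) (Fintype.piFinset W)).image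
    (fun c => nrm p c G)

/-- value of a reduced monomial in a model -/
def mval {R : Type*} [CommSemiring R] (v : B ⊕ Fin n → R) (μ : (B → ℕ) × (Fin n → ℕ)) : R :=
  (∏ s : B, v (Sum.inl s) ^ μ.1 s) * ∏ j : Fin n, v (Sum.inr j) ^ μ.2 j

lemma semantic_eval {R : Type*} [CommSemiring R] (hid : ∀ a : R, a + a = a)
    (b : B → ℕ) (p : Fin n → ℕ) (hp : ∀ j, 1 ≤ p j)
    (v : B ⊕ Fin n → R) (hv0 : ∀ s : B, v (Sum.inl s) ^ b s = 0)
    (hv1 : ∀ j : Fin n, v (Sum.inr j) ^ p j = 1)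
    (W : ι → Finset (B ⊕ Fin n)) (hWne : ∀ k, (W k).Nonempty) (G : Finset ι) :
    ∏ k ∈ G, (∑ x ∈ W k, v x) = ∑ μ ∈ NFK b p W G, mval v μ := by
  classical
  rw [prod_sum_idem hid v W hWne G]
  have key : ∀ c ∈ Fintype.piFinset W,
      (∏ k ∈ G, v (c k)) = if Live b c G then mval v (nrm p c G) else 0 := by
    intro c _
    rw [prod_pick_eq_prod_pow]
    split_ifs with hlive
    · rw [mval, Fintype.prod_sum_type (fun z => v z ^ cnt c G z)]
      congr 1
      apply Finset.prod_congr rfl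
      intro j _
      conv_lhs => rw [← Nat.div_add_mod (cnt c G (Sum.inr j)) (p j)]
      rw [pow_add, pow_mul, hv1 j, one_pow, one_mul]
      rfl
    · simp only [Live, not_forall, not_lt] at hlive
      rcases hlive with ⟨s, hs⟩
      apply Finset.prod_eq_zero (Finset.mem_univ (Sum.inl s : B ⊕ Fin n))
      have : cnt c G (Sum.inl s) = b s + (cnt c G (Sum.inl s) - b s) := by omega
      rw [this, pow_add, hv0 s, zero_mul]
  rw [Finset.sum_congr rfl key]
  rw [Finset.sum_ite, Finset.sum_const_zero, add_zero]
  rw [NFK, idem_sum_image hid _ _ (mval v)]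

end Semantics

section Reroute
variable {ι V : Type*} [Fintype ι] [DecidableEq ι] [DecidableEq V]
variable (W : ι → Finset V) (F : Finset ι) (s₀ : V)

/-- the fresh-position existence (alternating-path step) -/
lemma fresh_exists (cap : V → ℕ)
    (cstar : ι → V) (hcs : cstar ∈ Fintype.piFinset W)
    (hcsadm : ∀ z, ¬ (z = s₀) → cnt cstar F z ≤ cap z)
    (hmax : ∀ c'' ∈ Fintype.piFinset W, (∀ z, ¬ (z = s₀) → cnt c'' F z ≤ cap z) →
      (F.filter fun k => ¬ (c'' k = s₀)).card ≤ (F.filter fun k => ¬ (cstar k = s₀)).card)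
    (hd : ∃ d ∈ F, cstar d = s₀)
    (c c₁ c₂ : ι → V) (hc₂ : c₂ ∈ Fintype.piFinset W)
    (hcadm : ∀ z, ¬ (z = s₀) → cnt c F z ≤ cap z)
    (z : V) (hz : ¬ (z = s₀))
    (h1z : cnt c₁ F z + 1 = cnt c F z)
    (h2 : ∀ z', cnt c₂ F z' + (if s₀ = z' then 1 else 0)
        = cnt cstar F z' + (if z = z' then 1 else 0))
    (h4z : cnt c₁ (F.filter fun k => ¬ (c₂ k = cstar k)) z + 1
        = cnt c₂ (F.filter fun k => ¬ (c₂ k = cstar k)) z) :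
    ∃ k ∈ F, c₂ k = cstar k ∧ cstar k = z ∧ ¬ (c₁ k = z) := by
  classical
  set pos := F.filter fun k => ¬ (c₂ k = cstar k) with hposdef
  have hposF : pos ⊆ F := Finset.filter_subset _ _
  -- Step A : cnt cstar F z = cap z
  have hstar : cnt cstar F z = cap z := by
    by_contra hne
    have hlt : cnt cstar F z < cap z := lt_of_le_of_ne (hcsadm z hz) hne
    have hc₂adm : ∀ z', ¬ (z' = s₀) → cnt c₂ F z' ≤ cap z' := by
      intro z' hz'
      have := h2 z'
      rw [if_neg (fun h : s₀ = z' => hz' h.symm)] at this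
      by_cases hzz : z = z'
      · subst hzz
        rw [if_pos rfl] at this
        omega
      · rw [if_neg hzz] at this
        have := hcsadm z' hz'
        omega
    have hcnt2 : cnt c₂ F s₀ + 1 = cnt cstar F s₀ := by
      have := h2 s₀
      rw [if_pos rfl, if_neg hz] at this
      omega
    have hsplit2 : cnt c₂ F s₀ + (F.filter fun k => ¬ (c₂ k = s₀)).card = F.card :=
      Finset.card_filter_add_card_filter_not (fun k => c₂ k = s₀)
    have hsplitstar : cnt cstar F s₀ + (F.filter fun k => ¬ (cstar k = s₀)).card = F.card :=
      Finset.card_filter_add_card_filter_not (fun k => cstar k = s₀)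
    have := hmax c₂ hc₂ hc₂adm
    omega
  -- Step B : counting contradiction if there is no fresh position
  by_contra hno
  push_neg at hno
  have hno' : ∀ k ∈ F, c₂ k = cstar k → cstar k = z → c₁ k = z := by
    intro k hk h1 h2'
    by_contra hc
    exact hc (hno k hk h1 h2')
  have e1 : cnt c₂ F z = cap z + 1 := by
    have := h2 z
    rw [if_neg (fun h : s₀ = z => hz h.symm), if_pos rfl, hstar] at this
    omega
  have e2 : cnt c₂ pos z = cnt c₁ pos z + 1 := h4z.symm
  have e3 : cnt c₂ (F \ pos) z ≤ cnt c₁ (F \ pos) z := by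
    apply Finset.card_le_card
    intro k hk
    have hk1 := Finset.mem_filter.1 hk
    have hkF : k ∈ F := (Finset.mem_sdiff.1 hk1.1).1
    have hknpos : k ∉ pos := (Finset.mem_sdiff.1 hk1.1).2
    have hkeq : c₂ k = cstar k := by
      by_contra hcon
      exact hknpos (Finset.mem_filter.2 ⟨hkF, hcon⟩)
    refine Finset.mem_filter.2 ⟨hk1.1, ?_⟩
    exact hno' k hkF hkeq (hkeq ▸ hk1.2)
  have s1 : cnt c₂ pos z + cnt c₂ (F \ pos) z = cnt c₂ F z := cnt_sdiff_add hposF z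
  have s2 : cnt c₁ pos z + cnt c₁ (F \ pos) z = cnt c₁ F z := cnt_sdiff_add hposF z
  have e5 : cnt c F z ≤ cap z := hcadm z hz
  omega

/-- the inner alternating-path induction -/
lemma reroute_inner (cap : V → ℕ)
    (cstar : ι → V) (hcs : cstar ∈ Fintype.piFinset W)
    (hcsadm : ∀ z, ¬ (z = s₀) → cnt cstar F z ≤ cap z)
    (hmax : ∀ c'' ∈ Fintype.piFinset W, (∀ z, ¬ (z = s₀) → cnt c'' F z ≤ cap z) →
      (F.filter fun k => ¬ (c'' k = s₀)).card ≤ (F.filter fun k => ¬ (cstar k = s₀)).card)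
    (c : ι → V)
    (hcadm : ∀ z, ¬ (z = s₀) → cnt c F z ≤ cap z)
    (d : ι) (hdF : d ∈ F) (hds : cstar d = s₀) :
    ∀ m : ℕ, ∀ (c₁ c₂ : ι → V) (z : V),
      c₁ ∈ Fintype.piFinset W → c₂ ∈ Fintype.piFinset W → ¬ (z = s₀) →
      F.card ≤ (F.filter fun k => ¬ (c₂ k = cstar k)).card + m →
      (∀ z', cnt c₁ F z' + (if z = z' then 1 else 0)
          = cnt c F z' + (if s₀ = z' then 1 else 0)) →
      (∀ z', cnt c₂ F z' + (if s₀ = z' then 1 else 0)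
          = cnt cstar F z' + (if z = z' then 1 else 0)) →
      (∀ k, k ∉ (F.filter fun k => ¬ (c₂ k = cstar k)) → c₁ k = c k) →
      (∀ z', cnt c₁ (F.filter fun k => ¬ (c₂ k = cstar k)) z' + (if z = z' then 1 else 0)
          = cnt c₂ (F.filter fun k => ¬ (c₂ k = cstar k)) z' + (if s₀ = z' then 1 else 0)) →
      (∀ k ∈ (F.filter fun k => ¬ (c₂ k = cstar k)), cstar k = s₀ → k = d) →
      (d ∈ (F.filter fun k => ¬ (c₂ k = cstar k))) → (c₁ d = s₀) →
      ∃ c', c' ∈ Fintype.piFinset W ∧ (∀ z', cnt c' F z' = cnt c F z') ∧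
        (∀ k, k ∉ F → c' k = c k) ∧
        (∀ k ∈ F, cstar k = s₀ → ¬ (c' k = s₀) → (k ≠ d ∧ ¬ (c k = s₀))) := by
  classical
  intro m
  induction m with
  | zero =>
    intro c₁ c₂ z hc₁ hc₂ hz hcard h1 h2 h3 h4 h5 hd1 hd2
    exfalso
    have h1z : cnt c₁ F z + 1 = cnt c F z := by
      have := h1 z; rw [if_pos rfl, if_neg (fun h : s₀ = z => hz h.symm)] at this; omega
    have h4z : cnt c₁ (F.filter fun k => ¬ (c₂ k = cstar k)) z + 1
        = cnt c₂ (F.filter fun k => ¬ (c₂ k = cstar k)) z := by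
      have := h4 z; rw [if_pos rfl, if_neg (fun h : s₀ = z => hz h.symm)] at this; omega
    obtain ⟨k, hkF, hk2, hkz, hk1⟩ :=
      fresh_exists W F s₀ cap cstar hcs hcsadm hmax ⟨d, hdF, hds⟩ c c₁ c₂ hc₂ hcadm z hz h1z h2 h4z
    have hpos : (F.filter fun k => ¬ (c₂ k = cstar k)) = F :=
      Finset.eq_of_subset_of_card_le (Finset.filter_subset _ _) (by omega)
    have : k ∈ F.filter fun k => ¬ (c₂ k = cstar k) := by rw [hpos]; exact hkF
    exact (Finset.mem_filter.1 this).2 hk2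
  | succ m ih =>
    intro c₁ c₂ z hc₁ hc₂ hz hcard h1 h2 h3 h4 h5 hd1 hd2
    set pos := F.filter fun k => ¬ (c₂ k = cstar k) with hposdef
    have h1z : cnt c₁ F z + 1 = cnt c F z := by
      have := h1 z; rw [if_pos rfl, if_neg (fun h : s₀ = z => hz h.symm)] at this; omega
    have h4z : cnt c₁ pos z + 1 = cnt c₂ pos z := by
      have := h4 z; rw [if_pos rfl, if_neg (fun h : s₀ = z => hz h.symm)] at this; omega
    obtain ⟨k, hkF, hk2, hkz, hk1⟩ :=
      fresh_exists W F s₀ cap cstar hcs hcsadm hmax ⟨d, hdF, hds⟩ c c₁ c₂ hc₂ hcadm z hz h1z h2 h4z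
    have hknpos : k ∉ pos := by
      intro hmem
      exact (Finset.mem_filter.1 hmem).2 hk2
    have hzWk : z ∈ W k := by
      have := Fintype.mem_piFinset.1 hcs k
      rwa [hkz] at this
    have hkd : k ≠ d := by
      intro h
      rw [h, hds] at hkz
      exact hz hkz.symm
    by_cases hck : c₁ k = s₀
    · -- terminate
      refine ⟨Function.update c₁ k z, ?_, ?_, ?_, ?_⟩
      · rw [Fintype.mem_piFinset]
        intro a
        rcases eq_or_ne a k with rfl | hak
        · rwa [Function.update_self]
        · rw [Function.update_of_ne hak]
          exact Fintype.mem_piFinset.1 hc₁ a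
      · intro z'
        have e := cnt_update hkF z z' (c := c₁)
        rw [hck] at e
        have := h1 z'
        omega
      · intro a ha
        rw [Function.update_of_ne (fun h : a = k => ha (h ▸ hkF))]
        exact h3 a (fun hmem => ha (Finset.filter_subset _ _ hmem))
      · intro a haF has hane
        have hak : a ≠ k := by
          intro h
          rw [h, hkz] at has
          exact hz has
        rw [Function.update_of_ne hak] at hane
        have hanpos : a ∉ pos := by
          intro hmem
          have := h5 a hmem has
          rw [this] at hane
          exact hane hd2
        have : c₁ a = c a := h3 a hanpos
        rw [this] at hane
        refine ⟨?_, hane⟩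
        intro h
        exact hanpos (h ▸ hd1)
    · -- recurse
      have hckz : ¬ (c₁ k = z) := hk1
      have hc₁Wk : c₁ k ∈ W k := Fintype.mem_piFinset.1 hc₁ k
      have hpos' : (F.filter fun k' => ¬ ((Function.update c₂ k (c₁ k)) k' = cstar k'))
          = insert k pos := by
        ext a
        constructor
        · intro ha
          have haF := (Finset.mem_filter.1 ha).1
          have hane := (Finset.mem_filter.1 ha).2
          rcases eq_or_ne a k with rfl | hak
          · exact Finset.mem_insert_self _ _
          · rw [Function.update_of_ne hak] at hane
            exact Finset.mem_insert_of_mem (Finset.mem_filter.2 ⟨haF, hane⟩)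
        · intro ha
          rcases Finset.mem_insert.1 ha with rfl | ha
          · refine Finset.mem_filter.2 ⟨hkF, ?_⟩
            rw [Function.update_self, hkz]
            exact hckz
          · have haF := (Finset.mem_filter.1 ha).1
            have hane := (Finset.mem_filter.1 ha).2
            have hak : a ≠ k := fun h => hknpos (h ▸ ha)
            refine Finset.mem_filter.2 ⟨haF, ?_⟩
            rw [Function.update_of_ne hak]
            exact hane
      apply ih (Function.update c₁ k z) (Function.update c₂ k (c₁ k)) (c₁ k)
      · rw [Fintype.mem_piFinset]
        intro a
        rcases eq_or_ne a k with rfl | hak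
        · rwa [Function.update_self]
        · rw [Function.update_of_ne hak]; exact Fintype.mem_piFinset.1 hc₁ a
      · rw [Fintype.mem_piFinset]
        intro a
        rcases eq_or_ne a k with rfl | hak
        · rwa [Function.update_self]
        · rw [Function.update_of_ne hak]; exact Fintype.mem_piFinset.1 hc₂ a
      · exact hck
      · -- cardinality
        rw [hpos']
        rw [Finset.card_insert_of_notMem hknpos]
        omega
      · -- h1'
        intro z'
        have e := cnt_update hkF z z' (c := c₁)
        have := h1 z'
        omega
      · -- h2'
        intro z'
        have e := cnt_update hkF (c₁ k) z' (c := c₂)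
        rw [hk2, hkz] at e
        have := h2 z'
        omega
      · -- h3'
        intro a ha
        rw [hpos'] at ha
        have hak : a ≠ k := fun h => ha (h ▸ Finset.mem_insert_self _ _)
        have hanpos : a ∉ pos := fun h => ha (Finset.mem_insert_of_mem h)
        rw [Function.update_of_ne hak]
        exact h3 a hanpos
      · -- h4'
        intro z'
        rw [hpos']
        have i1 : cnt (Function.update c₁ k z) (insert k pos) z'
            = cnt (Function.update c₁ k z) pos z' + (if z = z' then 1 else 0) := by
          rw [cnt_insert hknpos, Function.update_self]
        have i2 : cnt (Function.update c₂ k (c₁ k)) (insert k pos) z'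
            = cnt (Function.update c₂ k (c₁ k)) pos z' + (if c₁ k = z' then 1 else 0) := by
          rw [cnt_insert hknpos, Function.update_self]
        have j1 : cnt (Function.update c₁ k z) pos z' = cnt c₁ pos z' := by
          apply cnt_congr
          intro a ha
          exact Function.update_of_ne (fun h : a = k => hknpos (h ▸ ha)) _ _
        have j2 : cnt (Function.update c₂ k (c₁ k)) pos z' = cnt c₂ pos z' := by
          apply cnt_congr
          intro a ha
          exact Function.update_of_ne (fun h : a = k => hknpos (h ▸ ha)) _ _
        have := h4 z'
        rw [i1, i2, j1, j2]
        omega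
      · -- h5'
        intro a ha has
        rw [hpos'] at ha
        rcases Finset.mem_insert.1 ha with rfl | ha
        · exact absurd (hkz.symm.trans has) hz
        · exact h5 a ha has
      · -- d ∈ pos'
        rw [hpos']
        exact Finset.mem_insert_of_mem hd1
      · -- c₁' d = s₀
        rw [Function.update_of_ne (fun h => hkd h.symm)]
        exact hd2


/-- the outer induction: fix the positions where the max selection dumps, one at a time -/
lemma reroute_outer (cap : V → ℕ) (hWne : ∀ k, (W k).Nonempty) (hs₀ : ∀ k ∈ F, s₀ ∈ W k)
    (cstar : ι → V) (hcs : cstar ∈ Fintype.piFinset W)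
    (hcsadm : ∀ z, ¬ (z = s₀) → cnt cstar F z ≤ cap z)
    (hmax : ∀ c'' ∈ Fintype.piFinset W, (∀ z, ¬ (z = s₀) → cnt c'' F z ≤ cap z) →
      (F.filter fun k => ¬ (c'' k = s₀)).card ≤ (F.filter fun k => ¬ (cstar k = s₀)).card) :
    ∀ M : ℕ, ∀ c : ι → V, c ∈ Fintype.piFinset W →
      (∀ z, ¬ (z = s₀) → cnt c F z ≤ cap z) →
      (F.filter fun k => cstar k = s₀ ∧ ¬ (c k = s₀)).card ≤ M →
      ∃ c', c' ∈ Fintype.piFinset W ∧ (∀ z', cnt c' F z' = cnt c F z') ∧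
        (∀ k, k ∉ F → c' k = c k) ∧ (∀ k ∈ F, cstar k = s₀ → c' k = s₀) := by
  classical
  intro M
  induction M with
  | zero =>
    intro c hc hcadm hM
    refine ⟨c, hc, fun _ => rfl, fun _ _ => rfl, ?_⟩
    intro k hkF hks
    by_contra hne
    have : k ∈ F.filter fun k => cstar k = s₀ ∧ ¬ (c k = s₀) :=
      Finset.mem_filter.2 ⟨hkF, hks, hne⟩
    have := Finset.card_pos.2 ⟨k, this⟩
    omega
  | succ M ih =>
    intro c hc hcadm hM
    by_cases hE : ∃ d ∈ F, cstar d = s₀ ∧ ¬ (c d = s₀)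
    · obtain ⟨d, hdF, hds, hdc⟩ := hE
      -- set up the inner induction
      have hzWd : c d ∈ W d := Fintype.mem_piFinset.1 hc d
      have hpos1 : (F.filter fun k => ¬ ((Function.update cstar d (c d)) k = cstar k)) = {d} := by
        ext a
        constructor
        · intro ha
          have haF := (Finset.mem_filter.1 ha).1
          have hane := (Finset.mem_filter.1 ha).2
          rcases eq_or_ne a d with rfl | had
          · exact Finset.mem_singleton_self _
          · rw [Function.update_of_ne had] at hane
            exact absurd rfl hane
        · intro ha
          rw [Finset.mem_singleton.1 ha]
          refine Finset.mem_filter.2 ⟨hdF, ?_⟩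
          rw [Function.update_self, hds]
          exact hdc
      obtain ⟨c'', hc''pi, hc''cnt, hc''off, hc''fix⟩ :=
        reroute_inner W F s₀ cap cstar hcs hcsadm hmax c hcadm d hdF hds
          F.card (Function.update c d s₀) (Function.update cstar d (c d)) (c d)
          (by
            rw [Fintype.mem_piFinset]
            intro a
            rcases eq_or_ne a d with rfl | had
            · rw [Function.update_self]; exact hs₀ a hdF
            · rw [Function.update_of_ne had]; exact Fintype.mem_piFinset.1 hc a)
          (by
            rw [Fintype.mem_piFinset]
            intro a
            rcases eq_or_ne a d with rfl | had
            · rw [Function.update_self]; exact hzWd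
            · rw [Function.update_of_ne had]; exact Fintype.mem_piFinset.1 hcs a)
          hdc
          (by rw [hpos1]; simp)
          (fun z' => cnt_update hdF s₀ z')
          (fun z' => by
            have := cnt_update hdF (c d) z' (c := cstar)
            rw [hds] at this
            omega)
          (fun k hk => by
            rw [hpos1] at hk
            exact Function.update_of_ne (fun h : k = d => hk (h ▸ Finset.mem_singleton_self d)) _ _)
          (fun z' => by
            rw [hpos1, cnt_singleton, cnt_singleton, Function.update_self, Function.update_self]
            omega)
          (fun k hk _ => by rw [hpos1] at hk; exact Finset.mem_singleton.1 hk)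
          (by rw [hpos1]; exact Finset.mem_singleton_self d)
          (Function.update_self d s₀ c)
      have hc''adm : ∀ z, ¬ (z = s₀) → cnt c'' F z ≤ cap z := by
        intro z hz
        rw [hc''cnt z]
        exact hcadm z hz
      have hsub : (F.filter fun k => cstar k = s₀ ∧ ¬ (c'' k = s₀))
          ⊆ (F.filter fun k => cstar k = s₀ ∧ ¬ (c k = s₀)).erase d := by
        intro a ha
        have haF := (Finset.mem_filter.1 ha).1
        have has := (Finset.mem_filter.1 ha).2.1
        have hane := (Finset.mem_filter.1 ha).2.2
        obtain ⟨had, hacne⟩ := hc''fix a haF has hane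
        exact Finset.mem_erase.2 ⟨had, Finset.mem_filter.2 ⟨haF, has, hacne⟩⟩
      have hdmem : d ∈ F.filter fun k => cstar k = s₀ ∧ ¬ (c k = s₀) :=
        Finset.mem_filter.2 ⟨hdF, hds, hdc⟩
      have hM' : (F.filter fun k => cstar k = s₀ ∧ ¬ (c'' k = s₀)).card ≤ M := by
        have h1 := Finset.card_le_card hsub
        have h2 := Finset.card_erase_of_mem hdmem
        have h3 := Finset.card_pos.2 ⟨d, hdmem⟩
        omega
      obtain ⟨c', hc'pi, hc'cnt, hc'off, hc'fix⟩ := ih c'' hc''pi hc''adm hM'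
      refine ⟨c', hc'pi, ?_, ?_, hc'fix⟩
      · intro z'
        rw [hc'cnt z', hc''cnt z']
      · intro k hk
        rw [hc'off k hk, hc''off k hk]
    · push_neg at hE
      refine ⟨c, hc, fun _ => rfl, fun _ _ => rfl, ?_⟩
      intro k hkF hks
      by_contra hne
      exact hne (hE k hkF hks)

/-- packaged rerouting theorem: there is a set `D` of `P` positions in `F` that
can always be forced to pick `s₀` without changing pick-counts -/
theorem reroute_exists [Fintype V] (cap : V → ℕ) (hWne : ∀ k, (W k).Nonempty)
    (hs₀ : ∀ k ∈ F, s₀ ∈ W k) (P : ℕ)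
    (hcard : (∑ z ∈ Finset.univ.erase s₀, cap z) + P ≤ F.card) :
    ∃ D : Finset ι, D ⊆ F ∧ D.card = P ∧
      ∀ c ∈ Fintype.piFinset W, (∀ z, ¬ (z = s₀) → cnt c F z ≤ cap z) →
      ∃ c', c' ∈ Fintype.piFinset W ∧ (∀ z', cnt c' F z' = cnt c F z') ∧
        (∀ k, k ∉ F → c' k = c k) ∧ (∀ k ∈ D, c' k = s₀) := by
  classical
  -- the admissible selections
  set S := (Fintype.piFinset W).filter
    (fun c => ∀ z, ¬ (z = s₀) → cnt c F z ≤ cap z) with hSdef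
  have hSne : S.Nonempty := by
    refine ⟨fun k => if h : k ∈ F then s₀ else (hWne k).choose, ?_⟩
    rw [hSdef, Finset.mem_filter]
    constructor
    · rw [Fintype.mem_piFinset]
      intro a
      by_cases h : a ∈ F
      · simpa [h] using hs₀ a h
      · simpa [h] using (hWne a).choose_spec
    · intro z hz
      have : cnt (fun k => if h : k ∈ F then s₀ else (hWne k).choose) F z = 0 := by
        apply cnt_eq_zero
        intro k hk
        simp only [hk, dif_pos]
        exact fun h => hz h.symm
      omega
  obtain ⟨cstar, hcsS, hcsmax⟩ := Finset.exists_max_image S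
    (fun c => (F.filter fun k => ¬ (c k = s₀)).card) hSne
  have hcs : cstar ∈ Fintype.piFinset W := (Finset.mem_filter.1 hcsS).1
  have hcsadm : ∀ z, ¬ (z = s₀) → cnt cstar F z ≤ cap z := (Finset.mem_filter.1 hcsS).2
  have hmax : ∀ c'' ∈ Fintype.piFinset W, (∀ z, ¬ (z = s₀) → cnt c'' F z ≤ cap z) →
      (F.filter fun k => ¬ (c'' k = s₀)).card ≤ (F.filter fun k => ¬ (cstar k = s₀)).card := by
    intro c'' hc'' hadm
    exact hcsmax c'' (Finset.mem_filter.2 ⟨hc'', hadm⟩)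
  -- enough dump positions
  have hdump : P ≤ (F.filter fun k => cstar k = s₀).card := by
    have hsplit : (F.filter fun k => cstar k = s₀).card
        + (F.filter fun k => ¬ (cstar k = s₀)).card = F.card :=
      Finset.card_filter_add_card_filter_not (fun k => cstar k = s₀)
    have hN : (F.filter fun k => ¬ (cstar k = s₀)).card ≤ ∑ z ∈ Finset.univ.erase s₀, cap z := by
      have hfib : ∑ z ∈ Finset.univ.erase s₀, cnt cstar (F.filter fun k => ¬ (cstar k = s₀)) z
          = (F.filter fun k => ¬ (cstar k = s₀)).card := by
        apply sum_cnt
        intro k hk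
        exact Finset.mem_erase.2 ⟨(Finset.mem_filter.1 hk).2, Finset.mem_univ _⟩
      rw [← hfib]
      apply Finset.sum_le_sum
      intro z hz
      have hzne : ¬ (z = s₀) := (Finset.mem_erase.1 hz).1
      calc cnt cstar (F.filter fun k => ¬ (cstar k = s₀)) z
          ≤ cnt cstar F z := cnt_le_of_subset (Finset.filter_subset _ _) z
        _ ≤ cap z := hcsadm z hzne
    omega
  obtain ⟨D, hDsub, hDcard⟩ := Finset.exists_subset_card_eq hdump
  refine ⟨D, hDsub.trans (Finset.filter_subset _ _), hDcard, ?_⟩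
  intro c hc hcadm
  obtain ⟨c', hc'pi, hc'cnt, hc'off, hc'fix⟩ :=
    reroute_outer W F s₀ cap hWne hs₀ cstar hcs hcsadm hmax
      (F.filter fun k => cstar k = s₀ ∧ ¬ (c k = s₀)).card c hc hcadm le_rfl
  refine ⟨c', hc'pi, hc'cnt, hc'off, ?_⟩
  intro k hkD
  have hk := hDsub hkD
  exact hc'fix k (Finset.mem_of_mem_filter _ hk) (Finset.mem_filter.1 hk).2

end Reroute

section Normalize
variable {ι : Type*} [Fintype ι] [DecidableEq ι]
variable {B : Type*} [Fintype B] [DecidableEq B] {n : ℕ}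

open Sum

lemma normalize_selection (p : Fin n → ℕ) (hp : ∀ j, 2 ≤ p j)
    (W : ι → Finset (B ⊕ Fin n)) (F : Finset ι) (i : Fin n)
    (hs₀ : ∀ k ∈ F, Sum.inr i ∈ W k) :
    ∀ m : ℕ, ∀ c ∈ Fintype.piFinset W,
      (∑ j ∈ Finset.univ.filter (fun j => i < j), cnt c F (Sum.inr j)) ≤ m →
      ∃ c₂ ∈ Fintype.piFinset W,
        (∀ s : B, cnt c₂ Finset.univ (Sum.inl s) = cnt c Finset.univ (Sum.inl s)) ∧
        (∀ j, cnt c₂ Finset.univ (Sum.inr j) % p j = cnt c Finset.univ (Sum.inr j) % p j) ∧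
        (∀ j, i < j → cnt c₂ F (Sum.inr j) < Nat.lcm (p j) (p i)) := by
  classical
  intro m
  induction m with
  | zero =>
    intro c hc hm
    refine ⟨c, hc, fun _ => rfl, fun _ => rfl, ?_⟩
    intro j hij
    have hj : j ∈ Finset.univ.filter (fun j => i < j) := Finset.mem_filter.2 ⟨Finset.mem_univ _, hij⟩
    have h0 : cnt c F (Sum.inr j) = 0 := by
      simpa using Finset.sum_eq_zero_iff.mp (Nat.le_zero.mp hm) j hj
    have hpj := hp j
    have hpi := hp i
    have hlcm : 0 < Nat.lcm (p j) (p i) := Nat.lcm_pos (by omega) (by omega)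
    omega
  | succ m ih =>
    intro c hc hm
    by_cases hbad : ∃ j, i < j ∧ Nat.lcm (p j) (p i) ≤ cnt c F (Sum.inr j)
    · obtain ⟨j, hij, hcntj⟩ := hbad
      have hij' : ¬ ((Sum.inr i : B ⊕ Fin n) = Sum.inr j) := by
        intro h
        exact absurd (Sum.inr.inj h) (ne_of_lt hij)
      obtain ⟨T, hTsub, hTcard⟩ := Finset.exists_subset_card_eq hcntj
      have hTF : T ⊆ F := hTsub.trans (Finset.filter_subset _ _)
      have hTpick : ∀ k ∈ T, c k = Sum.inr j := fun k hk => (Finset.mem_filter.1 (hTsub hk)).2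
      set c' := fun k => if k ∈ T then (Sum.inr i : B ⊕ Fin n) else c k with hc'def
      have hc'pi : c' ∈ Fintype.piFinset W := by
        rw [Fintype.mem_piFinset]
        intro a
        by_cases haT : a ∈ T
        · simp only [hc'def, if_pos haT]
          exact hs₀ a (hTF haT)
        · simp only [hc'def, if_neg haT]
          exact Fintype.mem_piFinset.1 hc a
      have hovF := cnt_override hTF hij' hTpick
      have hovU := cnt_override (hTF.trans (Finset.subset_univ F)) hij' hTpick
      rw [← hc'def] at hovF hovU
      have hpj := hp j
      have hpi := hp i
      have hlcm : 0 < Nat.lcm (p j) (p i) := Nat.lcm_pos (by omega) (by omega)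
      -- measure decreases
      have hmeas : (∑ j' ∈ Finset.univ.filter (fun j' => i < j'), cnt c' F (Sum.inr j'))
          + Nat.lcm (p j) (p i)
          = ∑ j' ∈ Finset.univ.filter (fun j' => i < j'), cnt c F (Sum.inr j') := by
        have hjmem : j ∈ Finset.univ.filter (fun j' => i < j') :=
          Finset.mem_filter.2 ⟨Finset.mem_univ _, hij⟩
        rw [← Finset.add_sum_erase _ _ hjmem, ← Finset.add_sum_erase _ _ hjmem]
        have hrest : ∀ j' ∈ (Finset.univ.filter (fun j' => i < j')).erase j,
            cnt c' F (Sum.inr j') = cnt c F (Sum.inr j') := by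
          intro j' hj'
          have hj'j : j' ≠ j := Finset.ne_of_mem_erase hj'
          have hj'i : i < j' := (Finset.mem_filter.1 (Finset.mem_of_mem_erase hj')).2
          apply hovF.2.2
          · intro h
            exact absurd (Sum.inr.inj h) (ne_of_lt hj'i).symm
          · intro h
            exact hj'j (Sum.inr.inj h)
        rw [Finset.sum_congr rfl hrest]
        have := hovF.1
        rw [hTcard] at this
        omega
      obtain ⟨c₂, hc₂pi, hcnt1, hcnt2, hcnt3⟩ := ih c' hc'pi (by omega)
      refine ⟨c₂, hc₂pi, ?_, ?_, hcnt3⟩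
      · intro s
        rw [hcnt1 s]
        apply hovU.2.2 <;> simp
      · intro j'
        rw [hcnt2 j']
        by_cases hj'j : j' = j
        · subst hj'j
          have h1 : cnt c' Finset.univ (Sum.inr j') + Nat.lcm (p j') (p i) = cnt c Finset.univ (Sum.inr j') := by
            have := hovU.1
            rw [hTcard] at this
            exact this
          obtain ⟨t, ht⟩ := Nat.dvd_lcm_left (p j') (p i)
          rw [← h1, ht, Nat.add_mul_mod_self_left]
        · by_cases hj'i : j' = i
          · subst hj'i
            have h1 : cnt c' Finset.univ (Sum.inr j') = cnt c Finset.univ (Sum.inr j') + Nat.lcm (p j) (p j') := by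
              have := hovU.2.1
              rw [hTcard] at this
              exact this
            obtain ⟨t, ht⟩ := Nat.dvd_lcm_right (p j) (p j')
            rw [h1, ht, Nat.add_mul_mod_self_left]
          · have : cnt c' Finset.univ (Sum.inr j') = cnt c Finset.univ (Sum.inr j') := by
              apply hovU.2.2
              · intro h
                exact hj'i (Sum.inr.inj h)
              · intro h
                exact hj'j (Sum.inr.inj h)
            rw [this]
    · push_neg at hbad
      refine ⟨c, hc, fun _ => rfl, fun _ => rfl, hbad⟩

end Normalize

/-- general cut-off lemma: with bounded variables `B`
(axiom `s^{b s} = 0`) and periodic variables `s₁,…,s_n` (axiom `sᵢ^{p i} = 1`),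
let `bnd = |B|₁·(n+1) + Σ_{1≤i≤j≤n} lcm(p j, p i) − n(n+1)/2` where
`|B|₁ = Σ_{s∈B} (b s − 1)`. Every product of linear terms over `B ∪ P` of
length exceeding `bnd` either has normal form `0` (it vanishes in every model)
or admits a strict subproduct with the same normal form (equal value in every
model). -/
theorem general_cutoff
    {B : Type*} [Fintype B] {n : ℕ}
    (b : B → ℕ) (p : Fin n → ℕ) (hb : ∀ s, 2 ≤ b s) (hp : ∀ i, 2 ≤ p i)
    (l : List (Finset (B ⊕ Fin n))) (hne : ∀ W ∈ l, W.Nonempty)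
    (hlen : (∑ s : B, (b s - 1)) * (n + 1) +
        (∑ i : Fin n, ∑ j : Fin n, if i ≤ j then Nat.lcm (p j) (p i) else 0) -
        n * (n + 1) / 2 < l.length) :
    (∀ (R : Type) [CommSemiring R], (∀ a : R, a + a = a) →
      ∀ v : B ⊕ Fin n → R, (∀ s : B, v (Sum.inl s) ^ b s = 0) →
        (∀ i : Fin n, v (Sum.inr i) ^ p i = 1) →
        (l.map fun W => ∑ x ∈ W, v x).prod = 0) ∨
    (∃ l' : List (Finset (B ⊕ Fin n)), l'.Sublist l ∧ l' ≠ l ∧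
      ∀ (R : Type) [CommSemiring R], (∀ a : R, a + a = a) →
        ∀ v : B ⊕ Fin n → R, (∀ s : B, v (Sum.inl s) ^ b s = 0) →
          (∀ i : Fin n, v (Sum.inr i) ^ p i = 1) →
          (l'.map fun W => ∑ x ∈ W, v x).prod =
            (l.map fun W => ∑ x ∈ W, v x).prod) := by
  classical
  set W : Fin l.length → Finset (B ⊕ Fin n) := fun k => l.get k with hWdef
  have hWne : ∀ k, (W k).Nonempty := fun k => hne _ (l.get_mem k)
  have hp1 : ∀ j, 1 ≤ p j := fun j => le_trans (by norm_num) (hp j)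
  -- the class of a position
  set cls : Fin l.length → Option (Fin n) := fun k =>
    if h : (Finset.univ.filter (fun j => (Sum.inr j : B ⊕ Fin n) ∈ W k)).Nonempty
    then some ((Finset.univ.filter (fun j => (Sum.inr j : B ⊕ Fin n) ∈ W k)).min' h)
    else none with hclsdef
  have hclsnone : ∀ k, cls k = none → ∀ j : Fin n, (Sum.inr j : B ⊕ Fin n) ∉ W k := by
    intro k hk j hj
    rw [hclsdef] at hk
    by_cases h : (Finset.univ.filter (fun j => (Sum.inr j : B ⊕ Fin n) ∈ W k)).Nonempty
    · simp [h] at hk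
    · exact h ⟨j, by simp [hj]⟩
  have hclssome : ∀ k (i : Fin n), cls k = some i →
      (Sum.inr i : B ⊕ Fin n) ∈ W k ∧ ∀ j : Fin n, j < i → (Sum.inr j : B ⊕ Fin n) ∉ W k := by
    intro k i hk
    rw [hclsdef] at hk
    by_cases h : (Finset.univ.filter (fun j => (Sum.inr j : B ⊕ Fin n) ∈ W k)).Nonempty
    · simp only [h, dif_pos, Option.some.injEq] at hk
      constructor
      · have := Finset.min'_mem _ h
        rw [hk] at this
        exact (Finset.mem_filter.1 this).2
      · intro j hji hj
        have hmem : j ∈ Finset.univ.filter (fun j' => (Sum.inr j' : B ⊕ Fin n) ∈ W k) := by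
          simp [hj]
        have hle : (Finset.univ.filter (fun j' => (Sum.inr j' : B ⊕ Fin n) ∈ W k)).min' h ≤ j :=
          Finset.min'_le _ j hmem
        rw [hk] at hle
        exact absurd hji (not_lt.2 hle)
    · simp [h] at hk
  set K₁ : ℕ := ∑ s : B, (b s - 1) with hK₁def
  set γ : Fin n → ℕ :=
    fun i => ∑ j ∈ Finset.univ.filter (fun j => i ≤ j), (Nat.lcm (p j) (p i) - 1) with hγdef
  -- the number of indices ≥ i
  have hcard_ge : ∀ i : Fin n, (Finset.univ.filter (fun j => i ≤ j)).card = n - i.1 := by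
    intro i
    have h1 : (Finset.univ.filter (fun j => j < i)).card + (Finset.univ.filter (fun j => i ≤ j)).card = n := by
      have h := Finset.card_filter_add_card_filter_not (s := (Finset.univ : Finset (Fin n)))
        (fun j => j < i)
      simp only [not_lt] at h
      rw [Finset.card_univ, Fintype.card_fin] at h
      omega
    have h2 : (Finset.univ.filter (fun j => j < i)).card = i.1 := by
      rw [show Finset.univ.filter (fun j => j < i) = Finset.Iio i from by ext; simp]
      exact Fin.card_Iio i
    have := i.2
    omega
  -- per-class identity for the inner lcm sums
  have hinner : ∀ i : Fin n,
      (∑ j : Fin n, if i ≤ j then Nat.lcm (p j) (p i) else 0) = γ i + (n - i.1) := by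
    intro i
    rw [← Finset.sum_filter]
    have hterm : ∀ j ∈ Finset.univ.filter (fun j => i ≤ j),
        Nat.lcm (p j) (p i) = (Nat.lcm (p j) (p i) - 1) + 1 := by
      intro j _
      have hpj := hp j
      have hpi := hp i
      have : 0 < Nat.lcm (p j) (p i) := Nat.lcm_pos (by omega) (by omega)
      omega
    rw [Finset.sum_congr rfl hterm, Finset.sum_add_distrib, Finset.sum_const, smul_eq_mul,
      mul_one, hcard_ge i]
  -- Gauss
  have hgauss : (∑ i : Fin n, (n - i.1)) = n * (n + 1) / 2 := by
    have h1 : (∑ i : Fin n, (n - i.1)) = ∑ j ∈ Finset.range n, (n - j) :=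
      Fin.sum_univ_eq_sum_range (fun j => n - j) n
    have h2 : ∑ j ∈ Finset.range n, (n - (n - 1 - j)) = ∑ j ∈ Finset.range n, (n - j) :=
      Finset.sum_range_reflect (fun j => n - j) n
    have h3 : ∀ j ∈ Finset.range n, n - (n - 1 - j) = j + 1 := by
      intro j hj
      have := Finset.mem_range.1 hj
      omega
    have h4 : ∑ j ∈ Finset.range n, (n - j) = (∑ j ∈ Finset.range n, j) + n := by
      rw [← h2, Finset.sum_congr rfl h3, Finset.sum_add_distrib, Finset.sum_const,
        Finset.card_range, smul_eq_mul, mul_one]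
    have h5 := Finset.sum_range_id n
    have h6 : n * (n + 1) / 2 = n * (n - 1) / 2 + n := by
      rcases Nat.eq_zero_or_pos n with rfl | hn
      · simp
      · obtain ⟨m, rfl⟩ : ∃ m, n = m + 1 := ⟨n - 1, by omega⟩
        have e1 : (m + 1) * (m + 1 + 1) = (m + 1) * (m + 1 - 1) + 2 * (m + 1) := by
          simp only [Nat.add_sub_cancel]
          ring
        rw [e1, Nat.add_mul_div_left _ _ (by norm_num : (0:ℕ) < 2)]
    rw [h1, h4, h5]
    omega
  -- reshaped length hypothesis
  have hlen2 : K₁ * (n + 1) + (∑ i : Fin n, γ i) < l.length := by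
    have hS : (∑ i : Fin n, ∑ j : Fin n, if i ≤ j then Nat.lcm (p j) (p i) else 0)
        = (∑ i : Fin n, γ i) + n * (n + 1) / 2 := by
      rw [← hgauss, ← Finset.sum_add_distrib]
      exact Finset.sum_congr rfl (fun i _ => hinner i)
    rw [hS] at hlen
    omega
  -- partition of positions into classes
  have hpart : l.length
      = (Finset.univ.filter (fun k => cls k = none)).card
        + ∑ i : Fin n, (Finset.univ.filter (fun k => cls k = some i)).card := by
    have h0 : (Finset.univ : Finset (Fin l.length)).card
        = ∑ o : Option (Fin n), (Finset.univ.filter (fun k => cls k = o)).card :=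
      Finset.card_eq_sum_card_fiberwise (fun k _ => Finset.mem_univ (cls k))
    rw [Finset.card_univ, Fintype.card_fin,
      Fintype.sum_option (fun o => (Finset.univ.filter (fun k => cls k = o)).card)] at h0
    exact h0
  by_cases hnone : K₁ < (Finset.univ.filter (fun k => cls k = none)).card
  · -- LEFT : the product vanishes in every model
    left
    intro R _ hid v hv0 hv1
    have hempty : NFK b p W (Finset.univ : Finset (Fin l.length)) = ∅ := by
      rw [NFK]
      rw [Finset.image_eq_empty, Finset.filter_eq_empty_iff]
      intro c hc
      intro hlive
      set C0 := Finset.univ.filter (fun k => cls k = none) with hC0def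
      have hCc : ∀ k ∈ C0, c k ∈ (Finset.univ : Finset B).image Sum.inl := by
        intro k hk
        have hcW : c k ∈ W k := Fintype.mem_piFinset.1 hc k
        rcases hck : c k with s | j
        · exact Finset.mem_image.2 ⟨s, Finset.mem_univ _, rfl⟩
        · rw [hck] at hcW
          exact absurd hcW (hclsnone k (Finset.mem_filter.1 hk).2 j)
      have hsum : ∑ s : B, cnt c C0 (Sum.inl s) = C0.card := by
        rw [← sum_cnt hCc]
        exact (Finset.sum_image (fun x _ y _ h => Sum.inl_injective h)).symm
      have hle : ∀ s : B, cnt c C0 (Sum.inl s) ≤ b s - 1 := by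
        intro s
        have h1 : cnt c C0 (Sum.inl s) ≤ cnt c Finset.univ (Sum.inl s) :=
          cnt_le_of_subset (Finset.subset_univ _) _
        have h2 := hlive s
        omega
      have : C0.card ≤ K₁ := by
        rw [← hsum, hK₁def]
        exact Finset.sum_le_sum (fun s _ => hle s)
      omega
    have hprod : (l.map fun Wt => ∑ x ∈ Wt, v x).prod
        = ∏ k : Fin l.length, (∑ x ∈ W k, v x) := by
      conv_lhs => rw [← List.ofFn_get l]
      rw [List.map_ofFn, List.prod_ofFn]
      rfl
    rw [hprod, semantic_eval hid b p hp1 v hv0 hv1 W hWne, hempty, Finset.sum_empty]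
  · push_neg at hnone
    -- find the overfull class
    have hex : ∃ i : Fin n, K₁ + γ i < (Finset.univ.filter (fun k => cls k = some i)).card := by
      by_contra hcon
      push_neg at hcon
      have hsum : (∑ i : Fin n, (Finset.univ.filter (fun k => cls k = some i)).card)
          ≤ ∑ i : Fin n, (K₁ + γ i) := Finset.sum_le_sum (fun i _ => hcon i)
      rw [Finset.sum_add_distrib, Finset.sum_const, Finset.card_univ, Fintype.card_fin,
        smul_eq_mul] at hsum
      have hmul : K₁ * (n + 1) = n * K₁ + K₁ := by ring
      omega
    obtain ⟨i, hFcard⟩ := hex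
    set F : Finset (Fin l.length) := Finset.univ.filter (fun k => cls k = some i) with hFdef
    have hs₀F : ∀ k ∈ F, (Sum.inr i : B ⊕ Fin n) ∈ W k :=
      fun k hk => (hclssome k i (Finset.mem_filter.1 hk).2).1
    have hlow : ∀ k ∈ F, ∀ j : Fin n, j < i → (Sum.inr j : B ⊕ Fin n) ∉ W k :=
      fun k hk => (hclssome k i (Finset.mem_filter.1 hk).2).2
    set s₀ : B ⊕ Fin n := Sum.inr i with hs₀def
    set cap : (B ⊕ Fin n) → ℕ := fun z =>
      Sum.elim (fun s => b s - 1) (fun j => if i < j then Nat.lcm (p j) (p i) - 1 else 0) z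
      with hcapdef
    -- budget for the rerouting lemma
    have hγsplit : γ i = (p i - 1)
        + ∑ j ∈ Finset.univ.filter (fun j => i < j), (Nat.lcm (p j) (p i) - 1) := by
      simp only [hγdef]
      have hins : Finset.univ.filter (fun j => i ≤ j)
          = insert i (Finset.univ.filter (fun j => i < j)) := by
        ext j
        simp only [Finset.mem_filter, Finset.mem_univ, true_and, Finset.mem_insert]
        constructor
        · intro h
          rcases eq_or_lt_of_le h with h | h
          · exact Or.inl h.symm
          · exact Or.inr h
        · intro h
          rcases h with rfl | h
          · exact le_refl _
          · exact le_of_lt h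
      rw [hins, Finset.sum_insert (by simp)]
      rw [Nat.lcm_self]
    have hcapsum : (∑ z ∈ Finset.univ.erase s₀, cap z) + p i ≤ F.card := by
      have h1 : (∑ z ∈ Finset.univ.erase s₀, cap z) = ∑ z : B ⊕ Fin n, cap z := by
        apply Finset.sum_erase
        rw [hcapdef, hs₀def]
        simp
      have h2 : (∑ z : B ⊕ Fin n, cap z)
          = K₁ + ∑ j ∈ Finset.univ.filter (fun j => i < j), (Nat.lcm (p j) (p i) - 1) := by
        rw [hcapdef, Fintype.sum_sum_type]
        simp only [Sum.elim_inl, Sum.elim_inr]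
        rw [← Finset.sum_filter, ← hK₁def]
      have hpi := hp i
      omega
    obtain ⟨D, hDF, hDcard, hrer⟩ :=
      reroute_exists W F s₀ cap hWne hs₀F (p i) hcapsum
    set K' : Finset (Fin l.length) := Finset.univ \ D with hK'def
    have hDuniv : D ⊆ Finset.univ := Finset.subset_univ _
    -- decomposition of K'
    have hdecomp : K' = ((Finset.univ : Finset (Fin l.length)) \ F) ∪ (F \ D) := by
      ext k
      simp only [hK'def, Finset.mem_sdiff, Finset.mem_union, Finset.mem_univ, true_and]
      constructor
      · intro hk
        by_cases hkF : k ∈ F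
        · exact Or.inr ⟨hkF, hk⟩
        · exact Or.inl hkF
      · intro hk
        rcases hk with hk | hk
        · exact fun hkD => hk (hDF hkD)
        · exact hk.2
    have hdisj : Disjoint ((Finset.univ : Finset (Fin l.length)) \ F) (F \ D) := by
      rw [Finset.disjoint_left]
      intro a ha ha'
      exact (Finset.mem_sdiff.1 ha).2 (Finset.mem_sdiff.1 ha').1
    -- equality of normal forms
    have hNF : NFK b p W K' = NFK b p W (Finset.univ : Finset (Fin l.length)) := by
      apply Finset.Subset.antisymm
      · -- extend a selection by picking s₀ on D
        intro μ hμ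
        rw [NFK, Finset.mem_image] at hμ
        obtain ⟨c', hc'mem, hc'nrm⟩ := hμ
        have hc'pi : c' ∈ Fintype.piFinset W := (Finset.mem_filter.1 hc'mem).1
        have hc'live : Live b c' K' := (Finset.mem_filter.1 hc'mem).2
        set c'' : Fin l.length → B ⊕ Fin n := fun k => if k ∈ D then s₀ else c' k with hc''def
        have hc''pi : c'' ∈ Fintype.piFinset W := by
          rw [Fintype.mem_piFinset]
          intro a
          simp only [hc''def]
          by_cases haD : a ∈ D
          · simp only [if_pos haD]
            exact hs₀F a (hDF haD)
          · simp only [if_neg haD]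
            exact Fintype.mem_piFinset.1 hc'pi a
        have hcntK' : ∀ z, cnt c'' K' z = cnt c' K' z := by
          intro z
          apply cnt_congr
          intro k hk
          simp only [hc''def]
          rw [if_neg (Finset.mem_sdiff.1 hk).2]
        have hcntD : ∀ z, ¬ (z = s₀) → cnt c'' D z = 0 := by
          intro z hz
          apply cnt_eq_zero
          intro k hk h
          simp only [hc''def] at h
          rw [if_pos hk] at h
          exact hz h.symm
        have hcntDs : cnt c'' D s₀ = p i := by
          rw [← hDcard]
          apply cnt_eq_card
          intro k hk
          simp only [hc''def]
          rw [if_pos hk]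
        have hsplit : ∀ z, cnt c'' D z + cnt c'' K' z = cnt c'' Finset.univ z := by
          intro z
          rw [hK'def]
          exact cnt_sdiff_add hDuniv z
        have hcnt : ∀ z, ¬ (z = s₀) → cnt c'' Finset.univ z = cnt c' K' z := by
          intro z hz
          rw [← hsplit z, hcntD z hz, hcntK']
          omega
        have hcnts : cnt c'' Finset.univ s₀ = cnt c' K' s₀ + p i := by
          rw [← hsplit s₀, hcntDs, hcntK']
          omega
        rw [NFK, Finset.mem_image]
        refine ⟨c'', Finset.mem_filter.2 ⟨hc''pi, ?_⟩, ?_⟩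
        · intro s
          have := hc'live s
          rw [hcnt (Sum.inl s) (by rw [hs₀def]; simp)]
          exact this
        · rw [← hc'nrm]
          rw [nrm, nrm]
          refine Prod.ext (funext fun s => ?_) (funext fun j => ?_)
          · simp only
            rw [hcnt (Sum.inl s) (by rw [hs₀def]; simp)]
          · simp only
            by_cases hj : j = i
            · rw [hj, ← hs₀def, hcnts, Nat.add_mod_right]
            · rw [hcnt (Sum.inr j) (by rw [hs₀def]; simp [hj])]
      · -- normalize and reroute
        intro μ hμ
        rw [NFK, Finset.mem_image] at hμ
        obtain ⟨c, hcmem, hcnrm⟩ := hμ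
        have hcpi : c ∈ Fintype.piFinset W := (Finset.mem_filter.1 hcmem).1
        have hclive : Live b c Finset.univ := (Finset.mem_filter.1 hcmem).2
        obtain ⟨c₂, hc₂pi, hcnt1, hcnt2, hcnt3⟩ :=
          normalize_selection p hp W F i hs₀F
            (∑ j ∈ Finset.univ.filter (fun j => i < j), cnt c F (Sum.inr j)) c hcpi le_rfl
        have hc₂live : Live b c₂ Finset.univ := by
          intro s
          rw [hcnt1 s]
          exact hclive s
        have hadm : ∀ z, ¬ (z = s₀) → cnt c₂ F z ≤ cap z := by
          intro z hz
          rcases z with s | j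
          · have h1 : cnt c₂ F (Sum.inl s) ≤ cnt c₂ Finset.univ (Sum.inl s) :=
              cnt_le_of_subset (Finset.subset_univ _) _
            have h2 := hc₂live s
            rw [hcapdef]
            simp only [Sum.elim_inl]
            omega
          · rcases lt_trichotomy i j with hij | hij | hij
            · have := hcnt3 j hij
              rw [hcapdef]
              simp only [Sum.elim_inr, if_pos hij]
              omega
            · exact absurd (by rw [hs₀def, hij]) hz
            · have h0 : cnt c₂ F (Sum.inr j) = 0 := by
                apply cnt_eq_zero
                intro k hk h
                have := Fintype.mem_piFinset.1 hc₂pi k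
                rw [h] at this
                exact hlow k hk j hij this
              rw [hcapdef]
              simp only [Sum.elim_inr, if_neg (not_lt.2 (le_of_lt hij))]
              omega
        obtain ⟨c₃, hc₃pi, hc₃cnt, hc₃off, hc₃D⟩ := hrer c₂ hc₂pi hadm
        -- counts of c₃ on K'
        have hc₃univF : ∀ z, cnt c₃ (Finset.univ \ F) z = cnt c₂ (Finset.univ \ F) z := by
          intro z
          apply cnt_congr
          intro k hk
          exact hc₃off k (Finset.mem_sdiff.1 hk).2
        have hc₃Dz : ∀ z, ¬ (z = s₀) → cnt c₃ D z = 0 := by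
          intro z hz
          apply cnt_eq_zero
          intro k hk h
          rw [hc₃D k hk] at h
          exact hz h.symm
        have hc₃Ds : cnt c₃ D s₀ = p i := by
          rw [← hDcard]
          exact cnt_eq_card (fun k hk => hc₃D k hk)
        have hsplitF : ∀ z, cnt c₃ D z + cnt c₃ (F \ D) z = cnt c₃ F z :=
          fun z => cnt_sdiff_add hDF z
        have hsplitU : ∀ (x : Fin l.length → B ⊕ Fin n) z,
            cnt x F z + cnt x (Finset.univ \ F) z = cnt x Finset.univ z :=
          fun x z => cnt_sdiff_add (Finset.subset_univ F) z
        have hK'cnt : ∀ z, cnt c₃ K' z = cnt c₃ (Finset.univ \ F) z + cnt c₃ (F \ D) z := by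
          intro z
          rw [hdecomp]
          exact cnt_union_disjoint hdisj z
        have hcntne : ∀ z, ¬ (z = s₀) → cnt c₃ K' z = cnt c₂ Finset.univ z := by
          intro z hz
          have e1 := hsplitF z
          have e2 := hsplitU c₂ z
          have e3 := hc₃cnt z
          have e4 := hc₃Dz z hz
          have e5 := hc₃univF z
          have e6 := hK'cnt z
          omega
        have hcnts : cnt c₃ K' s₀ + p i = cnt c₂ Finset.univ s₀ := by
          have e1 := hsplitF s₀
          have e2 := hsplitU c₂ s₀
          have e3 := hc₃cnt s₀
          have e5 := hc₃univF s₀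
          have e6 := hK'cnt s₀
          omega
        rw [NFK, Finset.mem_image]
        refine ⟨c₃, Finset.mem_filter.2 ⟨hc₃pi, ?_⟩, ?_⟩
        · intro s
          rw [hcntne (Sum.inl s) (by rw [hs₀def]; simp), hcnt1 s]
          exact hclive s
        · rw [← hcnrm, nrm, nrm]
          refine Prod.ext (funext fun s => ?_) (funext fun j => ?_)
          · simp only
            rw [hcntne (Sum.inl s) (by rw [hs₀def]; simp), hcnt1 s]
          · simp only
            by_cases hj : j = i
            · have e := hcnt2 i
              rw [← hs₀def] at e
              rw [hj, ← hs₀def, ← e, ← hcnts, Nat.add_mod_right]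
            · rw [hcntne (Sum.inr j) (by rw [hs₀def]; simp [hj]), hcnt2 j]
    -- build the sublist
    right
    set l' : List (Finset (B ⊕ Fin n)) :=
      ((List.finRange l.length).filter (fun k => k ∈ K')).map l.get with hl'def
    have hsubl : l'.Sublist l := by
      rw [hl'def]
      have h1 : ((List.finRange l.length).filter (fun k => k ∈ K')).Sublist
          (List.finRange l.length) := List.filter_sublist
      have := h1.map l.get
      rwa [List.map_get_finRange] at this
    have hl'len : l'.length = K'.card := by
      rw [hl'def, List.length_map]
      exact list_filter_mem_length _ (List.nodup_finRange _) _ (fun x _ => List.mem_finRange x)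
    have hK'card : K'.card = l.length - p i := by
      rw [hK'def, Finset.card_sdiff_of_subset hDuniv, Finset.card_univ, Fintype.card_fin, hDcard]
    have hlenpos : 0 < l.length := by omega
    have hpi := hp i
    have hDlen : D.card ≤ l.length := by
      have := Finset.card_le_card hDuniv
      rwa [Finset.card_univ, Fintype.card_fin] at this
    have hl'ne : l' ≠ l := by
      intro h
      have : l'.length = l.length := by rw [h]
      rw [hl'len, hK'card] at this
      rw [hDcard] at hDlen
      omega
    refine ⟨l', hsubl, hl'ne, ?_⟩
    intro R _ hid v hv0 hv1
    have hprod : (l.map fun Wt => ∑ x ∈ Wt, v x).prod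
        = ∏ k : Fin l.length, (∑ x ∈ W k, v x) := by
      conv_lhs => rw [← List.ofFn_get l]
      rw [List.map_ofFn, List.prod_ofFn]
      rfl
    have hprod' : (l'.map fun Wt => ∑ x ∈ Wt, v x).prod
        = ∏ k ∈ K', (∑ x ∈ W k, v x) := by
      rw [hl'def, List.map_map]
      exact list_filter_mem_prod _ _ (List.nodup_finRange _) _ (fun x _ => List.mem_finRange x)
    rw [hprod, hprod']
    rw [semantic_eval hid b p hp1 v hv0 hv1 W hWne K',
      semantic_eval hid b p hp1 v hv0 hv1 W hWne Finset.univ, hNF]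
end

section
/- The number of distinct nonzero normal forms of products of linear terms over a set B of bounded variables is at most K(|B|, Σ_{s∈B}(b(s)−1)), where K(a,b) = Σ_{i=0}^b (2^a−1)^i. -/
/-- Normal form of a product of linear terms over bounded variables `B` only
(axiom `s^{b s} = 0`), given as a list of factors: the set of reduced monomials
obtained by choosing one variable per factor, all counts staying strictly below
the bounds. -/
def NfB {B : Type*} [DecidableEq B] (b : B → ℕ) (l : List (Finset B)) :
    Set (B →₀ ℕ) :=
  {m | ∃ c : List B, List.Forall₂ (· ∈ ·) c l ∧ ∀ s, c.count s < b s ∧ m s = c.count s}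

/-- The set of nonzero normal forms of products of linear terms over `B`. -/
def NonzeroNfs {B : Type*} [DecidableEq B] (b : B → ℕ) : Set (Set (B →₀ ℕ)) :=
  {S | ∃ l : List (Finset B), (∀ W ∈ l, W.Nonempty) ∧ S = NfB b l ∧ S ≠ ∅}

/-- A list's length is the sum of its counts. -/
lemma length_eq_sum_count {B : Type*} [Fintype B] [DecidableEq B] (c : List B) :
    c.length = ∑ s : B, c.count s := by
  induction c with
  | nil => simp
  | cons a t ih =>
    simp only [List.length_cons, List.count_cons, beq_iff_eq, ih, Finset.sum_add_distrib]
    have : (∑ s : B, if a = s then 1 else 0) = 1 := by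
      rw [Finset.sum_ite_eq (Finset.univ) a (fun _ => 1)]
      simp
    omega

/-- ncard of a bounded union is at most the sum of ncards. -/
lemma ncard_biUnion_le' {α : Type*} (t : Finset ℕ) (f : ℕ → Set α)
    (hf : ∀ i ∈ t, (f i).Finite) :
    (⋃ i ∈ t, f i).ncard ≤ ∑ i ∈ t, (f i).ncard := by
  classical
  induction t using Finset.induction with
  | empty => simp
  | @insert a s hx ih =>
    rw [Finset.set_biUnion_insert, Finset.sum_insert hx]
    calc (f a ∪ ⋃ i ∈ s, f i).ncard ≤ (f a).ncard + (⋃ i ∈ s, f i).ncard :=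
          Set.ncard_union_le _ _
      _ ≤ (f a).ncard + ∑ i ∈ s, (f i).ncard := by
          exact Nat.add_le_add_left (ih (fun i hi => hf i (Finset.mem_insert_of_mem hi))) _

lemma card_nonempty_finset {B : Type*} [Fintype B] [DecidableEq B] :
    Fintype.card {W : Finset B // W.Nonempty} = 2 ^ Fintype.card B - 1 := by
  rw [Fintype.card_subtype]
  have h : Finset.univ.filter (fun W : Finset B => W.Nonempty) = Finset.univ \ {∅} := by
    ext W
    simp [Finset.nonempty_iff_ne_empty]
  rw [h, Finset.card_sdiff_of_subset (by simp), Finset.card_univ, Fintype.card_finset, Finset.card_singleton]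

/-- lists of length `i` with nonempty entries: the key counting set. -/
def Li {B : Type*} (i : ℕ) : Set (List (Finset B)) :=
  {l | l.length = i ∧ ∀ W ∈ l, W.Nonempty}

lemma Li_finite {B : Type*} [Fintype B] [DecidableEq B] (i : ℕ) : (Li (B := B) i).Finite :=
  (List.finite_length_eq (Finset B) i).subset (fun _ h => h.1)

lemma Li_ncard {B : Type*} [Fintype B] [DecidableEq B] (i : ℕ) :
    (Li (B := B) i).ncard ≤ (2 ^ Fintype.card B - 1) ^ i := by
  classical
  set t : Set (Fin i → Finset B) := {f | ∀ j, (f j).Nonempty} with ht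
  have htfin : t.Finite := Set.toFinite t
  have hmap : ∀ l ∈ Li (B := B) i, (fun (j : Fin i) => l.getD j ∅) ∈ t := by
    rintro l ⟨hlen, hne⟩ j
    have hj : (j : ℕ) < l.length := hlen ▸ j.isLt
    show (l.getD (↑j) ∅).Nonempty
    rw [List.getD_eq_getElem l ∅ hj]
    exact hne _ (List.getElem_mem hj)
  have hinj : Set.InjOn (fun l (j : Fin i) => l.getD j ∅) (Li (B := B) i) := by
    rintro l₁ ⟨h₁, _⟩ l₂ ⟨h₂, _⟩ h
    apply List.ext_getElem (h₁.trans h₂.symm)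
    intro n hn₁ hn₂
    have hn : n < i := h₁ ▸ hn₁
    have h' : l₁.getD n ∅ = l₂.getD n ∅ := congrFun h ⟨n, hn⟩
    rwa [List.getD_eq_getElem l₁ ∅ hn₁, List.getD_eq_getElem l₂ ∅ hn₂] at h'
  have h1 : (Li (B := B) i).ncard ≤ t.ncard :=
    Set.ncard_le_ncard_of_injOn _ hmap hinj htfin
  have h2 : t.ncard = (2 ^ Fintype.card B - 1) ^ i := by
    have : t.ncard = Nat.card t := Nat.card_coe_set_eq t ▸ rfl
    rw [this, Nat.card_eq_fintype_card]
    have e : ↥t ≃ (Fin i → {W : Finset B // W.Nonempty}) := Equiv.subtypePiEquivPi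
    rw [Fintype.card_congr e, Fintype.card_fun, card_nonempty_finset, Fintype.card_fin]
  omega

/-- Cut-off: a nonempty normal form has few factors. -/
lemma cutoff {B : Type*} [Fintype B] [DecidableEq B] (b : B → ℕ)
    (l : List (Finset B)) (h : NfB b l ≠ ∅) :
    l.length ≤ ∑ s : B, (b s - 1) := by
  obtain ⟨m, hm⟩ := Set.nonempty_iff_ne_empty.2 h
  obtain ⟨c, hc, hcount⟩ := hm
  have hlen : c.length = l.length := hc.length_eq
  rw [← hlen, length_eq_sum_count]
  exact Finset.sum_le_sum (fun s _ => by have := (hcount s).1; omega)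

/-- the number of distinct nonzero normal forms of products of
linear terms over bounded variables `B` is at most
`K(|B|, Σ_{s∈B}(b s − 1))` where `K(a,b) = Σ_{i=0}^b (2^a − 1)^i`. -/
theorem count_nonzero_normal_forms_bounded
    {B : Type*} [Fintype B] [DecidableEq B] (b : B → ℕ) (hb : ∀ s, 2 ≤ b s) :
    (NonzeroNfs b).Finite ∧
      (NonzeroNfs b).ncard ≤
        ∑ i ∈ Finset.range ((∑ s : B, (b s - 1)) + 1),
          (2 ^ Fintype.card B - 1) ^ i := by
  classical
  set N := ∑ s : B, (b s - 1) with hN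
  have hsub : NonzeroNfs b ⊆ ⋃ i ∈ Finset.range (N + 1), (NfB b) '' (Li (B := B) i) := by
    rintro S ⟨l, hne, rfl, hS⟩
    have hlen : l.length ≤ N := cutoff b l hS
    simp only [Set.mem_iUnion]
    exact ⟨l.length, by simpa using Nat.lt_succ_of_le hlen, l, ⟨rfl, hne⟩, rfl⟩
  have hfin : (⋃ i ∈ Finset.range (N + 1), (NfB b) '' (Li (B := B) i)).Finite :=
    Set.Finite.biUnion (Finset.range (N + 1)).finite_toSet
      (fun i _ => (Li_finite i).image _)
  refine ⟨hfin.subset hsub, ?_⟩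
  calc (NonzeroNfs b).ncard
      ≤ (⋃ i ∈ Finset.range (N + 1), (NfB b) '' (Li (B := B) i)).ncard :=
        Set.ncard_le_ncard hsub hfin
    _ ≤ ∑ i ∈ Finset.range (N + 1), ((NfB b) '' (Li (B := B) i)).ncard :=
        ncard_biUnion_le' _ _ (fun i _ => (Li_finite i).image _)
    _ ≤ ∑ i ∈ Finset.range (N + 1), (2 ^ Fintype.card B - 1) ^ i := by
        apply Finset.sum_le_sum
        intro i _
        exact (Set.ncard_image_le (Li_finite i)).trans (Li_ncard i)
end
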